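/- Let $\kappa$ be regular uncountable. In ${}^{\kappa}2$ with the bounded topology, every set of the form obtained by the generalized Souslin operation applied to a system of Borel sets with the property of Baire need not have the property of Baire; concretely, there is a system of open sets $\langle A_{\nu} : \nu \in {}^{<\kappa}\kappa \rangle$ such that $\bigcup_{f \in {}^{\kappa}\kappa} \bigcap_{i<\kappa} A_{f\upharpoonright i}$ does not have the property of Baire. -/

import Mathlib

open Cardinal Set

noncomputable section

/-- The basic open set `[ν]` determined by a pattern `ν` of length `β`:
all `η` agreeing with `ν` below `β`. -/
def cyl (β : Ordinal.{0}) (ν : Ordinal.{0} → Bool) : Set (Ordinal.{0} → Bool) :=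
  {η | ∀ i < β, η i = ν i}

/-- `A` is nowhere dense in `^κ2`: every `ν ∈ ^{<κ}2` has an extension `η`
whose basic open set avoids `A`. -/
def Nwd (κ : Cardinal.{0}) (A : Set (Ordinal.{0} → Bool)) : Prop :=
  ∀ β < κ.ord, ∀ ν : Ordinal.{0} → Bool,
    ∃ γ, γ < κ.ord ∧ β ≤ γ ∧ ∃ η : Ordinal.{0} → Bool,
      (∀ i < β, η i = ν i) ∧ cyl γ η ∩ A = ∅

/-- `A` is meager in `^κ2`: covered by a union of `κ` many nowhere dense sets. -/
def MeagerB (κ : Cardinal.{0}) (A : Set (Ordinal.{0} → Bool)) : Prop :=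
  ∃ R : Ordinal.{0} → Set (Ordinal.{0} → Bool),
    (∀ ξ < κ.ord, Nwd κ (R ξ)) ∧ A ⊆ ⋃ ξ ∈ Set.Iio κ.ord, R ξ

/-- `A` is open in the bounded topology on `^κ2`. -/
def IsOpenB (κ : Cardinal.{0}) (A : Set (Ordinal.{0} → Bool)) : Prop :=
  ∀ η ∈ A, ∃ i < κ.ord, cyl i η ⊆ A

/-- `C` is a closed unbounded subset of (the ordinals below) `o`. -/
def ClubIn (o : Ordinal.{0}) (C : Set Ordinal.{0}) : Prop :=
  C ⊆ Set.Iio o ∧ (∀ β < o, ∃ γ ∈ C, β ≤ γ) ∧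
    (∀ S : Set Ordinal.{0}, S ⊆ C → S.Nonempty → sSup S < o → sSup S ∈ C)

/-- CUB: the set of `η ∈ ^κ2` taking value 1 on some club of `κ`. -/
def CUB (κ : Cardinal.{0}) : Set (Ordinal.{0} → Bool) :=
  {η | ∃ C : Set Ordinal.{0}, ClubIn κ.ord C ∧ ∀ i ∈ C, η i = true}

/-- `A ⊆ ^κ2` has strong measure zero. -/
def SMZ (κ : Cardinal.{0}) (A : Set (Ordinal.{0} → Bool)) : Prop :=
  ∀ X : Set Ordinal.{0}, X ⊆ Set.Iio κ.ord → #X = Cardinal.lift.{1} κ →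
    ∃ f : Ordinal.{0} → (Ordinal.{0} → Bool), A ⊆ ⋃ ξ ∈ X, cyl ξ (f ξ)

/-- `f <*_κ g` on the index set `X`: `|{i ∈ X : f i ≥ g i}| < κ`. -/
def LtStarOn (κ : Cardinal.{0}) (X : Set Ordinal.{0}) (f g : Ordinal.{0} → Ordinal.{0}) : Prop :=
  #{i : Ordinal | i ∈ X ∧ g i ≤ f i} < Cardinal.lift.{1} κ

/-- `f <*_κ g` on all of `κ`. -/
def LtStar (κ : Cardinal.{0}) (f g : Ordinal.{0} → Ordinal.{0}) : Prop :=
  LtStarOn κ (Set.Iio κ.ord) f g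

/-- `f` maps ordinals below `κ` to ordinals below `κ`, i.e. `f ∈ ^κκ`. -/
def IntoKappa (κ : Cardinal.{0}) (f : Ordinal.{0} → Ordinal.{0}) : Prop :=
  ∀ i < κ.ord, f i < κ.ord

/-- `F ⊆ ^κκ` is `<*`-bounded. -/
def BoundedFam (κ : Cardinal.{0}) (F : Set (Ordinal.{0} → Ordinal.{0})) : Prop :=
  ∃ g, IntoKappa κ g ∧ ∀ f ∈ F, LtStar κ f g

/-- `F ⊆ ^κκ` is dominating. -/
def DominatingFam (κ : Cardinal.{0}) (F : Set (Ordinal.{0} → Ordinal.{0})) : Prop :=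
  ∀ g, IntoKappa κ g → ∃ f ∈ F, LtStar κ g f

/-- A coding family: for each `i < κ`, `F i` is an injection of `^i2` into `κ`
(it depends only on, and is injective on, restrictions to `i`). -/
def CodingOK (κ : Cardinal.{0}) (F : Ordinal.{0} → (Ordinal.{0} → Bool) → Ordinal.{0}) : Prop :=
  (∀ i < κ.ord, ∀ ν : Ordinal.{0} → Bool, F i ν < κ.ord) ∧
  (∀ i : Ordinal.{0}, ∀ ν ν' : Ordinal.{0} → Bool, (∀ j < i, ν j = ν' j) → F i ν = F i ν') ∧
  (∀ i < κ.ord, ∀ ν ν' : Ordinal.{0} → Bool, F i ν = F i ν' → ∀ j < i, ν j = ν' j)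

/-- `g` (restricted to domain `β`) is a strictly increasing continuous sequence
of ordinals below `κ`. -/
def SIC (κ : Cardinal.{0}) (β : Ordinal.{0}) (g : Ordinal.{0} → Ordinal.{0}) : Prop :=
  (∀ i < β, g i < κ.ord) ∧
  (∀ i j, i < j → j < β → g i < g j) ∧
  (∀ δ, δ < β → Order.IsSuccLimit δ → g δ = sSup (g '' Set.Iio δ))

/-- The open sets `A_ν` of the generalized Souslin representation of CUB:
if `ν` (of length `β`) is strictly increasing and continuous then
`A_ν = {η : ∀ i ∈ dom ν, η (ν i) = 1}`, and `A_ν = ∅` otherwise. -/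
def ANu (κ : Cardinal.{0}) (β : Ordinal.{0}) (g : Ordinal.{0} → Ordinal.{0}) : Set (Ordinal.{0} → Bool) :=
  {η | SIC κ β g ∧ ∀ i < β, η (g i) = true}

/-- The property of Baire in `^κ2` with the bounded topology. -/
def BaireProp (κ : Cardinal.{0}) (A : Set (Ordinal.{0} → Bool)) : Prop :=
  ∃ O, IsOpenB κ O ∧ MeagerB κ ((O \ A) ∪ (A \ O))


namespace SNB

open Ordinal

/-- Every subset of `Iio κ.ord` is bounded above. -/
lemma bddOf {s : Set Ordinal.{0}} (o : Ordinal.{0}) (h : ∀ x ∈ s, x < o) :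
    BddAbove s := ⟨o, fun x hx => (h x hx).le⟩

lemma sSup_mono' {s t : Set Ordinal.{0}} (hst : s ⊆ t) (ht : BddAbove t) :
    sSup s ≤ sSup t := by
  rcases s.eq_empty_or_nonempty with rfl | hs
  · simpa [csSup_empty] using bot_le
  · exact csSup_le_csSup ht hs hst

/-- Supremum of fewer than `κ` ordinals below `κ.ord` stays below `κ.ord`. -/
lemma ssup_lt {κ : Cardinal.{0}} (hreg : κ.IsRegular) {ξ : Ordinal.{0}} (hξ : ξ < κ.ord)
    (g : Ordinal.{0} → Ordinal.{0}) (hg : ∀ ζ < ξ, g ζ < κ.ord) :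
    sSup (g '' Set.Iio ξ) < κ.ord := by
  have himg : g '' Set.Iio ξ =
      Set.range (fun x : ξ.ToType => g ((Ordinal.ToType.mk (o := ξ)).symm x)) := by
    ext y
    constructor
    · rintro ⟨z, hz, rfl⟩
      exact ⟨(Ordinal.ToType.mk (o := ξ)) ⟨z, hz⟩, by simp⟩
    · rintro ⟨x, rfl⟩
      exact ⟨_, ((Ordinal.ToType.mk (o := ξ)).symm x).2, rfl⟩
  rw [himg]
  have : (⨆ x : ξ.ToType, g ((Ordinal.ToType.mk (o := ξ)).symm x)) < κ.ord := by
    refine Ordinal.iSup_lt_ord ?_ (fun x => hg _ ((Ordinal.ToType.mk (o := ξ)).symm x).2)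
    rw [Cardinal.mk_toType, hreg.cof_eq]
    exact Cardinal.lt_ord.mp hξ
  exact this

end SNB


namespace SNB

/-- The next free coordinate at stage `ξ`, given earlier choices `g`. -/
def bet (β₀ : Ordinal.{0}) (g : Ordinal.{0} → Ordinal.{0} × (Ordinal.{0} → Bool))
    (ξ : Ordinal.{0}) : Ordinal.{0} :=
  β₀ ⊔ sSup ((fun ζ => (g ζ).1) '' Set.Iio ξ)

/-- The set of earlier stages whose condition already decides coordinate `i`. -/
def patSet (g : Ordinal.{0} → Ordinal.{0} × (Ordinal.{0} → Bool)) (ξ i : Ordinal.{0}) :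
    Set Ordinal.{0} :=
  {ζ | ζ < ξ ∧ i < (g ζ).1}

open Classical in
/-- The pattern accumulated before stage `ξ`. -/
noncomputable def pat (β₀ : Ordinal.{0}) (ν₀ : Ordinal.{0} → Bool) (b : Bool)
    (g : Ordinal.{0} → Ordinal.{0} × (Ordinal.{0} → Bool)) (ξ i : Ordinal.{0}) : Bool :=
  if h : (patSet g ξ i).Nonempty then (g (sInf (patSet g ξ i))).2 i
  else if i < β₀ then ν₀ i else b

/-- The requirement on the choice made at stage `ξ`. -/
def Good (κ : Cardinal.{0}) (R : Ordinal.{0} → Set (Ordinal.{0} → Bool))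
    (β₀ : Ordinal.{0}) (ν₀ : Ordinal.{0} → Bool) (b : Bool)
    (g : Ordinal.{0} → Ordinal.{0} × (Ordinal.{0} → Bool)) (ξ : Ordinal.{0})
    (p : Ordinal.{0} × (Ordinal.{0} → Bool)) : Prop :=
  p.1 < κ.ord ∧ bet β₀ g ξ + 1 ≤ p.1 ∧
    (∀ i < bet β₀ g ξ + 1, p.2 i = pat β₀ ν₀ b g ξ i) ∧ cyl p.1 p.2 ∩ R ξ = ∅

lemma bet_congr {β₀ : Ordinal.{0}} {g g' : Ordinal.{0} → Ordinal.{0} × (Ordinal.{0} → Bool)}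
    {ξ : Ordinal.{0}} (h : ∀ ζ < ξ, g ζ = g' ζ) : bet β₀ g ξ = bet β₀ g' ξ := by
  unfold bet
  rw [Set.image_congr (fun ζ hζ => by rw [h ζ hζ])]

lemma patSet_congr {g g' : Ordinal.{0} → Ordinal.{0} × (Ordinal.{0} → Bool)}
    {ξ i : Ordinal.{0}} (h : ∀ ζ < ξ, g ζ = g' ζ) : patSet g ξ i = patSet g' ξ i := by
  ext ζ
  simp only [patSet, Set.mem_setOf_eq]
  exact ⟨fun ⟨h1, h2⟩ => ⟨h1, by rwa [← h ζ h1]⟩, fun ⟨h1, h2⟩ => ⟨h1, by rwa [h ζ h1]⟩⟩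

lemma pat_congr {β₀ : Ordinal.{0}} {ν₀ : Ordinal.{0} → Bool} {b : Bool}
    {g g' : Ordinal.{0} → Ordinal.{0} × (Ordinal.{0} → Bool)}
    {ξ : Ordinal.{0}} (h : ∀ ζ < ξ, g ζ = g' ζ) (i : Ordinal.{0}) :
    pat β₀ ν₀ b g ξ i = pat β₀ ν₀ b g' ξ i := by
  classical
  unfold pat
  by_cases hne : (patSet g ξ i).Nonempty
  · rw [dif_pos hne, dif_pos (patSet_congr h ▸ hne), ← patSet_congr h,
      h _ (csInf_mem hne).1]
  · rw [dif_neg hne, dif_neg (patSet_congr h ▸ hne)]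

lemma good_congr {κ : Cardinal.{0}} {R : Ordinal.{0} → Set (Ordinal.{0} → Bool)}
    {β₀ : Ordinal.{0}} {ν₀ : Ordinal.{0} → Bool} {b : Bool}
    {g g' : Ordinal.{0} → Ordinal.{0} × (Ordinal.{0} → Bool)}
    {ξ : Ordinal.{0}} (h : ∀ ζ < ξ, g ζ = g' ζ) :
    Good κ R β₀ ν₀ b g ξ = Good κ R β₀ ν₀ b g' ξ := by
  funext p
  unfold Good
  rw [bet_congr h]
  simp only [pat_congr h]

/-- The transfinite recursion choosing conditions. -/
noncomputable def hFun (κ : Cardinal.{0}) (R : Ordinal.{0} → Set (Ordinal.{0} → Bool))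
    (β₀ : Ordinal.{0}) (ν₀ : Ordinal.{0} → Bool) (b : Bool) :
    Ordinal.{0} → Ordinal.{0} × (Ordinal.{0} → Bool) :=
  Ordinal.lt_wf.fix (fun ξ IH =>
    Classical.epsilon (Good κ R β₀ ν₀ b (fun ζ => if h : ζ < ξ then IH ζ h else default) ξ))

lemma hFun_eq (κ : Cardinal.{0}) (R : Ordinal.{0} → Set (Ordinal.{0} → Bool))
    (β₀ : Ordinal.{0}) (ν₀ : Ordinal.{0} → Bool) (b : Bool) (ξ : Ordinal.{0}) :
    hFun κ R β₀ ν₀ b ξ = Classical.epsilon (Good κ R β₀ ν₀ b (hFun κ R β₀ ν₀ b) ξ) := by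
  show Ordinal.lt_wf.fix _ ξ = _
  rw [WellFounded.fix_eq]
  congr 1
  exact good_congr (fun ζ hζ => by rw [dif_pos hζ]; rfl)

end SNB


namespace SNB

lemma lt_add_one' (a : Ordinal.{0}) : a < a + 1 := by
  rw [Ordinal.add_one_eq_succ]; exact Order.lt_succ a

/-- The Banach–Mazur style construction: avoid `κ` many nowhere dense sets,
extend an initial pattern, and take value `b` along a strictly increasing
continuous sequence. -/
lemma construction (κ : Cardinal.{0}) (R : Ordinal.{0} → Set (Ordinal.{0} → Bool))
    (β₀ : Ordinal.{0}) (ν₀ : Ordinal.{0} → Bool) (b : Bool)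
    (hreg : κ.IsRegular) (hR : ∀ ξ < κ.ord, Nwd κ (R ξ)) (hβ₀ : β₀ < κ.ord) :
    ∃ η : Ordinal.{0} → Bool, ∃ f : Ordinal.{0} → Ordinal.{0},
      (∀ i < β₀, η i = ν₀ i) ∧ (∀ ξ < κ.ord, η ∉ R ξ) ∧
      (∀ i < κ.ord, f i < κ.ord) ∧ (∀ i < κ.ord, SIC κ i f) ∧
      (∀ j < κ.ord, η (f j) = b) := by
  classical
  have klim : Order.IsSuccLimit κ.ord := Cardinal.isSuccLimit_ord hreg.aleph0_le
  set H : Ordinal.{0} → Ordinal.{0} × (Ordinal.{0} → Bool) := hFun κ R β₀ ν₀ b with hH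
  have key : ∀ ξ < κ.ord, Good κ R β₀ ν₀ b H ξ (H ξ) := by
    intro ξ
    induction ξ using Ordinal.induction with
    | _ ξ IH =>
      intro hξ
      have hγ : ∀ ζ < ξ, (H ζ).1 < κ.ord := fun ζ h => ((IH ζ h) (h.trans hξ)).1
      have hB : bet β₀ H ξ < κ.ord := max_lt hβ₀ (ssup_lt hreg hξ _ hγ)
      have hB1 : bet β₀ H ξ + 1 < κ.ord := by
        rw [Ordinal.add_one_eq_succ]; exact klim.succ_lt hB
      obtain ⟨γ, hγκ, hγge, ηx, hagr, hdisj⟩ := hR ξ hξ _ hB1 (pat β₀ ν₀ b H ξ)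
      have ex : ∃ p, Good κ R β₀ ν₀ b H ξ p := ⟨(γ, ηx), hγκ, hγge, hagr, hdisj⟩
      have hs := Classical.epsilon_spec ex
      rw [hH]
      rwa [← hFun_eq] at hs
  have hγκ : ∀ ξ < κ.ord, (H ξ).1 < κ.ord := fun ξ h => (key ξ h).1
  have hBγ : ∀ ξ < κ.ord, bet β₀ H ξ < (H ξ).1 :=
    fun ξ h => lt_of_lt_of_le (lt_add_one' _) (key ξ h).2.1
  have hBκ : ∀ ξ < κ.ord, bet β₀ H ξ < κ.ord := fun ξ h => (hBγ ξ h).trans (hγκ ξ h)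
  have hγle : ∀ ζ ξ, ζ < ξ → ξ < κ.ord → (H ζ).1 ≤ bet β₀ H ξ := by
    intro ζ ξ hζξ hξ
    refine le_trans (le_csSup (bddOf κ.ord ?_) ?_) (le_max_right _ _)
    · rintro x ⟨ζ', hζ', rfl⟩; exact hγκ ζ' (hζ'.trans hξ)
    · exact ⟨ζ, hζξ, rfl⟩
  have coh : ∀ ξ < κ.ord, ∀ ζ < ξ, ∀ i < (H ζ).1, (H ξ).2 i = (H ζ).2 i := by
    intro ξ
    induction ξ using Ordinal.induction with
    | _ ξ IH =>
      intro hξ ζ hζ i hi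
      have hiB : i < bet β₀ H ξ := lt_of_lt_of_le hi (hγle ζ ξ hζ hξ)
      have h1 : (H ξ).2 i = pat β₀ ν₀ b H ξ i :=
        (key ξ hξ).2.2.1 i (hiB.trans (lt_add_one' _))
      have hne : (patSet H ξ i).Nonempty := ⟨ζ, hζ, hi⟩
      have hmem : sInf (patSet H ξ i) ∈ patSet H ξ i := csInf_mem hne
      have h2 : pat β₀ ν₀ b H ξ i = (H (sInf (patSet H ξ i))).2 i := by
        unfold pat; rw [dif_pos hne]
      have hle : sInf (patSet H ξ i) ≤ ζ := csInf_le' ⟨hζ, hi⟩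
      rcases lt_or_eq_of_le hle with hlt | heq
      · rw [h1, h2]
        exact (IH ζ hζ (hζ.trans hξ) _ hlt i hmem.2).symm
      · rw [h1, h2, heq]
  set η : Ordinal.{0} → Bool := fun i => pat β₀ ν₀ b H κ.ord i with hηdef
  have etaEq : ∀ ξ < κ.ord, ∀ i < (H ξ).1, η i = (H ξ).2 i := by
    intro ξ hξ i hi
    have hne : (patSet H κ.ord i).Nonempty := ⟨ξ, hξ, hi⟩
    have hmem : sInf (patSet H κ.ord i) ∈ patSet H κ.ord i := csInf_mem hne
    have h2 : η i = (H (sInf (patSet H κ.ord i))).2 i := by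
      rw [hηdef]; show pat β₀ ν₀ b H κ.ord i = _
      unfold pat; rw [dif_pos hne]
    have hle : sInf (patSet H κ.ord i) ≤ ξ := csInf_le' ⟨hξ, hi⟩
    rcases lt_or_eq_of_le hle with hlt | heq
    · rw [h2]; exact (coh ξ hξ _ hlt i hmem.2).symm
    · rw [h2, heq]
  have hnR : ∀ ξ < κ.ord, η ∉ R ξ := by
    intro ξ hξ hmem
    have hcyl : η ∈ cyl (H ξ).1 (H ξ).2 := fun i hi => etaEq ξ hξ i hi
    have hd := (key ξ hξ).2.2.2
    rw [Set.eq_empty_iff_forall_notMem] at hd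
    exact hd η ⟨hcyl, hmem⟩
  have h0κ : (0 : Ordinal.{0}) < κ.ord := hreg.ord_pos
  have agree₀ : ∀ i < β₀, η i = ν₀ i := by
    intro i hi
    have h0 : i < (H 0).1 :=
      lt_of_lt_of_le (lt_of_lt_of_le hi (le_max_left _ _)) (hBγ 0 h0κ).le
    have hne : (patSet H κ.ord i).Nonempty := ⟨0, h0κ, h0⟩
    have hmem : sInf (patSet H κ.ord i) ∈ patSet H κ.ord i := csInf_mem hne
    set ζ₀ := sInf (patSet H κ.ord i) with hζ₀def
    have h2 : η i = (H ζ₀).2 i := by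
      rw [hηdef]; show pat β₀ ν₀ b H κ.ord i = _
      unfold pat; rw [dif_pos hne]
    have hiBζ : i < bet β₀ H ζ₀ + 1 :=
      lt_of_lt_of_le (lt_of_lt_of_le hi (le_max_left _ _)) (lt_add_one' _).le
    have h3 : (H ζ₀).2 i = pat β₀ ν₀ b H ζ₀ i := (key ζ₀ hmem.1).2.2.1 i hiBζ
    have hempty : ¬ (patSet H ζ₀ i).Nonempty := by
      rintro ⟨ζ, hζlt, hζi⟩
      exact absurd hζlt (not_lt.mpr (csInf_le' (show ζ ∈ patSet H κ.ord i from
        ⟨hζlt.trans hmem.1, hζi⟩)))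
    have h4 : pat β₀ ν₀ b H ζ₀ i = ν₀ i := by
      unfold pat; rw [dif_neg hempty, if_pos hi]
    rw [h2, h3, h4]
  have clubval : ∀ ξ < κ.ord, η (bet β₀ H ξ) = b := by
    intro ξ hξ
    have h1 : η (bet β₀ H ξ) = (H ξ).2 (bet β₀ H ξ) := etaEq ξ hξ _ (hBγ ξ hξ)
    have h2 : (H ξ).2 (bet β₀ H ξ) = pat β₀ ν₀ b H ξ (bet β₀ H ξ) :=
      (key ξ hξ).2.2.1 _ (lt_add_one' _)
    have hempty : ¬ (patSet H ξ (bet β₀ H ξ)).Nonempty := by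
      rintro ⟨ζ, hζ, hζB⟩
      exact absurd hζB (not_lt.mpr (hγle ζ ξ hζ hξ))
    have h3 : pat β₀ ν₀ b H ξ (bet β₀ H ξ) = b := by
      have hnlt : ¬ (bet β₀ H ξ < β₀) := not_lt.mpr (le_max_left β₀ _)
      unfold pat
      rw [dif_neg hempty, if_neg hnlt]
    rw [h1, h2, h3]
  have Bmono : ∀ ζ ξ, ζ < ξ → ξ < κ.ord → bet β₀ H ζ < bet β₀ H ξ :=
    fun ζ ξ h hξ => (hBγ ζ (h.trans hξ)).trans_le (hγle ζ ξ h hξ)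
  have Bcont : ∀ δ < κ.ord, Order.IsSuccLimit δ → bet β₀ H δ = sSup (bet β₀ H '' Set.Iio δ) := by
    intro δ hδ hlim
    have hbddB : BddAbove (bet β₀ H '' Set.Iio δ) :=
      bddOf κ.ord (by rintro x ⟨ζ, hζ, rfl⟩; exact hBκ ζ (hζ.trans hδ))
    have hne : (Set.Iio δ).Nonempty := ⟨0, hlim.pos⟩
    apply le_antisymm
    · apply max_le
      · exact le_trans (le_max_left β₀ _) (le_csSup hbddB ⟨0, hlim.pos, rfl⟩)
      · apply csSup_le (hne.image _)
        rintro x ⟨ζ, hζ, rfl⟩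
        have hζ1 : ζ + 1 < δ := by
          rw [Ordinal.add_one_eq_succ]; exact hlim.succ_lt hζ
        exact le_trans (hγle ζ (ζ + 1) (lt_add_one' _) (hζ1.trans hδ))
          (le_csSup hbddB ⟨ζ + 1, hζ1, rfl⟩)
    · apply csSup_le (hne.image _)
      rintro x ⟨ζ, hζ, rfl⟩
      apply max_le (le_max_left _ _)
      refine le_trans (sSup_mono' (Set.image_mono (Set.Iio_subset_Iio hζ.le))
        (bddOf κ.ord ?_)) (le_max_right _ _)
      rintro x ⟨ζ', hζ', rfl⟩
      exact hγκ ζ' (hζ'.trans hδ)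
  refine ⟨η, bet β₀ H, agree₀, hnR, fun i hi => hBκ i hi, ?_, fun j hj => clubval j hj⟩
  intro i hi
  exact ⟨fun j hj => hBκ j (hj.trans hi),
    fun a c hac hc => Bmono a c hac (hc.trans hi),
    fun δ hδ hlim => Bcont δ (hδ.trans hi) hlim⟩

end SNB


namespace SNB

lemma le_self (κ : Cardinal.{0}) (f : Ordinal.{0} → Ordinal.{0})
    (hsm : ∀ i j, i < j → j < κ.ord → f i < f j) : ∀ x < κ.ord, x ≤ f x := by
  intro x
  induction x using Ordinal.induction with
  | _ x IH =>
    intro hx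
    apply le_of_forall_lt
    intro z hz
    exact lt_of_le_of_lt (IH z hz (hz.trans hx)) (hsm z x hz hx)

/-- Two strictly increasing continuous sequences on `κ` have a common
fixed point below `κ.ord`. -/
lemma fixpt (κ : Cardinal.{0}) (hreg : κ.IsRegular) (hκ : ℵ₀ < κ)
    (f g : Ordinal.{0} → Ordinal.{0})
    (hf : ∀ i < κ.ord, SIC κ i f) (hg : ∀ i < κ.ord, SIC κ i g) :
    ∃ δ < κ.ord, f δ = δ ∧ g δ = δ := by
  have klim : Order.IsSuccLimit κ.ord := Cardinal.isSuccLimit_ord hreg.aleph0_le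
  have hsucc : ∀ a : Ordinal.{0}, a < κ.ord → a + 1 < κ.ord := fun a h => by
    rw [Ordinal.add_one_eq_succ]; exact klim.succ_lt h
  have fmono : ∀ i j, i < j → j < κ.ord → f i < f j := fun i j hij hj =>
    (hf (j + 1) (hsucc j hj)).2.1 i j hij (lt_add_one' j)
  have fval : ∀ j < κ.ord, f j < κ.ord := fun j hj =>
    (hf (j + 1) (hsucc j hj)).1 j (lt_add_one' j)
  have fcont : ∀ δ < κ.ord, Order.IsSuccLimit δ → f δ = sSup (f '' Set.Iio δ) := fun δ hδ hlim =>
    (hf (δ + 1) (hsucc δ hδ)).2.2 δ (lt_add_one' δ) hlim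
  have gmono : ∀ i j, i < j → j < κ.ord → g i < g j := fun i j hij hj =>
    (hg (j + 1) (hsucc j hj)).2.1 i j hij (lt_add_one' j)
  have gval : ∀ j < κ.ord, g j < κ.ord := fun j hj =>
    (hg (j + 1) (hsucc j hj)).1 j (lt_add_one' j)
  have gcont : ∀ δ < κ.ord, Order.IsSuccLimit δ → g δ = sSup (g '' Set.Iio δ) := fun δ hδ hlim =>
    (hg (δ + 1) (hsucc δ hδ)).2.2 δ (lt_add_one' δ) hlim
  set u : ℕ → Ordinal.{0} := fun n => Nat.rec 0 (fun _ x => (f x ⊔ g x) + 1) n with hu_def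
  have hu : ∀ n, u n < κ.ord := by
    intro n
    induction n with
    | zero => exact hreg.ord_pos
    | succ n ih => exact hsucc _ (max_lt (fval _ ih) (gval _ ih))
  have humono : ∀ n, u n < u (n + 1) := fun n =>
    lt_of_le_of_lt (le_trans (le_self κ f fmono _ (hu n)) (le_max_left _ _)) (lt_add_one' _)
  have hbdd : BddAbove (Set.range u) := bddOf κ.ord (by rintro x ⟨n, rfl⟩; exact hu n)
  set δ := ⨆ n, u n with hδdef
  have hle : ∀ n, u n ≤ δ := fun n => le_ciSup hbdd n
  have hδκ : δ < κ.ord :=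
    Ordinal.iSup_lt_ord (by rw [Cardinal.mk_nat, hreg.cof_eq]; exact hκ) hu
  have hex : ∀ x, x < δ → ∃ n, x < u n := fun x hx => (lt_ciSup_iff hbdd).mp hx
  have hδpos : 0 < δ := lt_of_lt_of_le (humono 0) (hle 1)
  have hδlim : Order.IsSuccLimit δ := by
    refine Ordinal.isSuccLimit_iff.mpr ⟨ne_of_gt hδpos, Order.isSuccPrelimit_of_succ_lt ?_⟩
    intro a ha
    obtain ⟨n, hn⟩ := hex a ha
    exact lt_of_le_of_lt (Order.succ_le_of_lt hn) (lt_of_lt_of_le (humono n) (hle (n + 1)))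
  have main : ∀ h : Ordinal.{0} → Ordinal.{0},
      (∀ i j, i < j → j < κ.ord → h i < h j) → (∀ j < κ.ord, h j < κ.ord) →
      h δ = sSup (h '' Set.Iio δ) → (∀ n, h (u n) ≤ u (n + 1)) → h δ = δ := by
    intro h hmono hval hcont hbound
    rw [hcont]
    have hbddi : BddAbove (h '' Set.Iio δ) := bddOf κ.ord (by
      rintro x ⟨z, hz, rfl⟩; exact hval z (hz.trans hδκ))
    have hne : (Set.Iio δ).Nonempty := ⟨0, hδpos⟩
    apply le_antisymm
    · apply csSup_le (hne.image h)
      rintro x ⟨z, hz, rfl⟩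
      obtain ⟨n, hn⟩ := hex z hz
      exact le_trans (hmono z (u n) hn (hu n)).le (le_trans (hbound n) (hle (n + 1)))
    · rw [hδdef]
      apply ciSup_le
      intro n
      exact le_trans (le_self κ h hmono _ (hu n))
        (le_csSup hbddi ⟨u n, lt_of_lt_of_le (humono n) (hle (n + 1)), rfl⟩)
  have hbf : ∀ n, f (u n) ≤ u (n + 1) :=
    fun n => le_trans (le_max_left _ _) (lt_add_one' ((f (u n)) ⊔ (g (u n)))).le
  have hbg : ∀ n, g (u n) ≤ u (n + 1) :=
    fun n => le_trans (le_max_right _ _) (lt_add_one' ((f (u n)) ⊔ (g (u n)))).le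
  exact ⟨δ, hδκ, main f fmono fval (fcont δ hδκ hδlim) hbf,
    main g gmono gval (gcont δ hδκ hδlim) hbg⟩

end SNB


/-- there is a system of open sets `⟨A_ν : ν ∈ ^{<κ}κ⟩` (each
`A_ν` depending only on `ν`) whose generalized Souslin operation
`⋃_{f ∈ ^κκ} ⋂_{i < κ} A_{f ↾ i}` does not have the property of Baire. -/
theorem souslin_not_baire (κ : Cardinal.{0}) (hreg : κ.IsRegular) (hκ : ℵ₀ < κ) :
    ∃ A : Ordinal.{0} → (Ordinal.{0} → Ordinal.{0}) → Set (Ordinal.{0} → Bool),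
      (∀ i < κ.ord, ∀ g, IsOpenB κ (A i g)) ∧
      (∀ i : Ordinal.{0}, ∀ f g : Ordinal.{0} → Ordinal.{0},
        (∀ j < i, f j = g j) → A i f = A i g) ∧
      ¬ BaireProp κ (⋃ f ∈ {f : Ordinal.{0} → Ordinal.{0} | IntoKappa κ f},
        ⋂ i ∈ Set.Iio κ.ord, A i f) := by
  classical
  have klim : Order.IsSuccLimit κ.ord := Cardinal.isSuccLimit_ord hreg.aleph0_le
  refine ⟨fun i g => ANu κ i g, ?_, ?_, ?_⟩
  · -- openness
    intro i hi g η hη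
    obtain ⟨hsic, hval⟩ := hη
    have hbdd : BddAbove ((fun j => g j + 1) '' Set.Iio i) :=
      SNB.bddOf κ.ord (by
        rintro x ⟨ζ, hζ, rfl⟩
        show g ζ + 1 < κ.ord
        rw [Ordinal.add_one_eq_succ]
        exact klim.succ_lt (hsic.1 ζ hζ))
    refine ⟨sSup ((fun j => g j + 1) '' Set.Iio i),
      SNB.ssup_lt hreg hi _ (fun ζ hζ => by
        rw [Ordinal.add_one_eq_succ]; exact klim.succ_lt (hsic.1 ζ hζ)), ?_⟩
    intro η' hη'
    refine ⟨hsic, fun j hj => ?_⟩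
    have hjlt : g j < sSup ((fun j => g j + 1) '' Set.Iio i) :=
      lt_of_lt_of_le (SNB.lt_add_one' _) (le_csSup hbdd ⟨j, hj, rfl⟩)
    rw [hη' (g j) hjlt, hval j hj]
  · -- dependence on restriction
    intro i f g hfg
    have himp : ∀ f' g' : Ordinal.{0} → Ordinal.{0}, (∀ j < i, f' j = g' j) →
        SIC κ i f' → SIC κ i g' := by
      rintro f' g' hfg' ⟨h1, h2, h3⟩
      refine ⟨fun j hj => hfg' j hj ▸ h1 j hj,
        fun a c hac hc => by
          rw [← hfg' a (hac.trans hc), ← hfg' c hc]; exact h2 a c hac hc,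
        fun δ hδ hlim => ?_⟩
      have himg : f' '' Set.Iio δ = g' '' Set.Iio δ :=
        Set.image_congr (fun x hx => hfg' x (lt_trans hx hδ))
      rw [← hfg' δ hδ, h3 δ hδ hlim, himg]
    ext η
    show (SIC κ i f ∧ ∀ j < i, η (f j) = true) ↔ (SIC κ i g ∧ ∀ j < i, η (g j) = true)
    constructor
    · rintro ⟨hs, hv⟩
      exact ⟨himp f g hfg hs, fun j hj => by rw [← hfg j hj]; exact hv j hj⟩
    · rintro ⟨hs, hv⟩
      exact ⟨himp g f (fun j hj => (hfg j hj).symm) hs,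
        fun j hj => by rw [hfg j hj]; exact hv j hj⟩
  · -- not Baire
    rintro ⟨O, hO, hM⟩
    obtain ⟨R, hR, hsub⟩ := hM
    by_cases hOne : O.Nonempty
    · obtain ⟨η₀, hη₀⟩ := hOne
      obtain ⟨i₀, hi₀, hcyl⟩ := hO η₀ hη₀
      obtain ⟨η, B, hagr, hnR, hBval, hsicB, hclub⟩ :=
        SNB.construction κ R i₀ η₀ false hreg hR hi₀
      have hηO : η ∈ O := hcyl (show η ∈ cyl i₀ η₀ from hagr)
      have hηS : η ∉ (⋃ f ∈ {f : Ordinal.{0} → Ordinal.{0} | IntoKappa κ f},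
          ⋂ i ∈ Set.Iio κ.ord, ANu κ i f) := by
        intro hS
        simp only [Set.mem_iUnion, Set.mem_setOf_eq] at hS
        obtain ⟨g, _, hgmem⟩ := hS
        simp only [Set.mem_iInter, Set.mem_Iio] at hgmem
        have hgsic : ∀ i < κ.ord, SIC κ i g := fun i hi => (hgmem i hi).1
        have hgval : ∀ j < κ.ord, η (g j) = true := by
          intro j hj
          have hjs : j + 1 < κ.ord := by
            rw [Ordinal.add_one_eq_succ]; exact klim.succ_lt hj
          exact (hgmem (j + 1) hjs).2 j (SNB.lt_add_one' j)
        obtain ⟨δ, hδκ, hBfix, hgfix⟩ := SNB.fixpt κ hreg hκ B g hsicB hgsic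
        have h1 : η δ = false := by rw [← hBfix]; exact hclub δ hδκ
        have h2 : η δ = true := by rw [← hgfix]; exact hgval δ hδκ
        rw [h1] at h2
        exact Bool.false_ne_true h2
      have hmem : η ∈ ⋃ ξ ∈ Set.Iio κ.ord, R ξ := hsub (Or.inl ⟨hηO, hηS⟩)
      simp only [Set.mem_iUnion, Set.mem_Iio] at hmem
      obtain ⟨ξ, hξ, hmem⟩ := hmem
      exact hnR ξ hξ hmem
    · rw [Set.not_nonempty_iff_eq_empty] at hOne
      obtain ⟨η, B, _, hnR, hBval, hsicB, hclub⟩ :=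
        SNB.construction κ R 0 (fun _ => true) true hreg hR hreg.ord_pos
      have hηS : η ∈ (⋃ f ∈ {f : Ordinal.{0} → Ordinal.{0} | IntoKappa κ f},
          ⋂ i ∈ Set.Iio κ.ord, ANu κ i f) := by
        simp only [Set.mem_iUnion, Set.mem_setOf_eq]
        refine ⟨B, hBval, ?_⟩
        simp only [Set.mem_iInter, Set.mem_Iio]
        intro i hi
        exact ⟨hsicB i hi, fun j hj => hclub j (hj.trans hi)⟩
      have hηO : η ∉ O := by rw [hOne]; exact Set.notMem_empty η
      have hmem : η ∈ ⋃ ξ ∈ Set.Iio κ.ord, R ξ := hsub (Or.inr ⟨hηS, hηO⟩)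
      simp only [Set.mem_iUnion, Set.mem_Iio] at hmem
      obtain ⟨ξ, hξ, hmem⟩ := hmem
      exact hnR ξ hξ hmem


end
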